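/- arXiv:1810.01340 — 2 statements merged into one kernel-verified Lean document; each statement's English description precedes it below -/
import Mathlib

section
/- If a metric space X admits a contracting barycenter map b : P₁(X) → X, then X admits a conical geodesic bicombing, given by σ(x, y, t) := b((1−t)·δ_x + t·δ_y). -/
open MeasureTheory ENNReal

/-- `K` is a coupling of `μ` and `ν`. -/
def IsCoupling {X : Type} [MeasurableSpace X]
    (K : Measure (X × X)) (μ ν : Measure X) : Prop :=
  K.map Prod.fst = μ ∧ K.map Prod.snd = ν

/-- The Wasserstein-1 distance: infimal transport cost over couplings. -/
noncomputable def W1 {X : Type} [MeasurableSpace X] [PseudoEMetricSpace X]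
    (μ ν : Measure X) : ℝ≥0∞ :=
  ⨅ K : {K : Measure (X × X) // IsCoupling K μ ν}, ∫⁻ p, edist p.1 p.2 ∂K.1

/-- `μ` is separably supported. -/
def SepSupp {X : Type} [MeasurableSpace X] [TopologicalSpace X] (μ : Measure X) : Prop :=
  ∃ s : Set X, TopologicalSpace.IsSeparable s ∧ μ sᶜ = 0

/-- `μ` belongs to the Wasserstein-1 space `P₁(X)`: a separably supported Borel
probability measure at finite Wasserstein-1 distance from the Dirac measures. -/
def InP1 {X : Type} [MeasurableSpace X] [MetricSpace X] (μ : Measure X) : Prop :=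
  IsProbabilityMeasure μ ∧ SepSupp μ ∧ ∃ x : X, W1 μ (Measure.dirac x) < ⊤

/-- A conical geodesic bicombing on a metric space: `σ x y` is a constant-speed
geodesic from `x` to `y` (parametrized on `[0,1]`) and the conical convexity
inequality holds. -/
def IsConicalBicombing {X : Type} [MetricSpace X] (σ : X → X → ℝ → X) : Prop :=
  (∀ x y : X, σ x y 0 = x ∧ σ x y 1 = y) ∧
  (∀ x y : X, ∀ s ∈ Set.Icc (0:ℝ) 1, ∀ t ∈ Set.Icc (0:ℝ) 1,
    dist (σ x y s) (σ x y t) = |s - t| * dist x y) ∧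
  (∀ x x' y y' : X, ∀ t ∈ Set.Icc (0:ℝ) 1,
    dist (σ x y t) (σ x' y' t) ≤ (1 - t) * dist x x' + t * dist y y')

section Aux

variable {X : Type} [MetricSpace X] [MeasurableSpace X] [BorelSpace X]

/-- The mixture `(1-t)·δ_x + t·δ_y`. -/
noncomputable def mixD (x y : X) (t : ℝ) : Measure X :=
  ENNReal.ofReal (1 - t) • Measure.dirac x + ENNReal.ofReal t • Measure.dirac y

lemma W1_le_coupling {μ ν : Measure X} (K : Measure (X × X)) (h : IsCoupling K μ ν) :
    W1 μ ν ≤ ∫⁻ p, edist p.1 p.2 ∂K :=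
  iInf_le (fun K : {K : Measure (X × X) // IsCoupling K μ ν} => ∫⁻ p, edist p.1 p.2 ∂K.1) ⟨K, h⟩

lemma w1_mix_same_t (x x' y y' : X) (t : ℝ) :
    W1 (mixD x y t) (mixD x' y' t)
      ≤ ENNReal.ofReal (1 - t) * edist x x' + ENNReal.ofReal t * edist y y' := by
  have h := W1_le_coupling (μ := mixD x y t) (ν := mixD x' y' t)
    (ENNReal.ofReal (1 - t) • Measure.dirac (x, x') + ENNReal.ofReal t • Measure.dirac (y, y'))
    (by
      constructor <;>
        simp [mixD, Measure.map_add _ _ measurable_fst, Measure.map_add _ _ measurable_snd,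
          Measure.map_smul, Measure.map_dirac' measurable_fst, Measure.map_dirac' measurable_snd])
  refine h.trans_eq ?_
  simp [lintegral_add_measure, lintegral_smul_measure, lintegral_dirac]

lemma w1_mix_geo (x y : X) (s t : ℝ) (hs : 0 ≤ s) (hst : s ≤ t) (ht : t ≤ 1) :
    W1 (mixD x y s) (mixD x y t) ≤ ENNReal.ofReal (t - s) * edist x y := by
  have h1 : ENNReal.ofReal (1 - t) + ENNReal.ofReal (t - s) = ENNReal.ofReal (1 - s) := by
    rw [← ENNReal.ofReal_add (by linarith) (by linarith)]; ring_nf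
  have h2 : ENNReal.ofReal (t - s) + ENNReal.ofReal s = ENNReal.ofReal t := by
    rw [← ENNReal.ofReal_add (by linarith) hs]; ring_nf
  have h := W1_le_coupling (μ := mixD x y s) (ν := mixD x y t)
    (ENNReal.ofReal (1 - t) • Measure.dirac (x, x) + ENNReal.ofReal (t - s) • Measure.dirac (x, y)
      + ENNReal.ofReal s • Measure.dirac (y, y))
    (by
      constructor
      · simp only [Measure.map_add _ _ measurable_fst, Measure.map_smul,
          Measure.map_dirac' measurable_fst, mixD]
        rw [← add_smul, h1]
      · simp only [Measure.map_add _ _ measurable_snd, Measure.map_smul,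
          Measure.map_dirac' measurable_snd, mixD]
        rw [add_assoc, ← add_smul, h2])
  refine h.trans ?_
  simp [lintegral_add_measure, lintegral_smul_measure, lintegral_dirac]

lemma inP1_mixD (x y : X) (t : ℝ) (h0 : 0 ≤ t) (h1 : t ≤ 1) : InP1 (mixD x y t) := by
  have hsum : ENNReal.ofReal (1 - t) + ENNReal.ofReal t = 1 := by
    rw [← ENNReal.ofReal_add (by linarith) h0]; norm_num
  refine ⟨⟨by simp [mixD, hsum]⟩, ⟨{x, y}, (Set.toFinite _).isSeparable, ?_⟩, x, ?_⟩
  · simp [mixD, Measure.dirac_apply]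
  · have h := W1_le_coupling (μ := mixD x y t) (ν := Measure.dirac x)
      (ENNReal.ofReal (1 - t) • Measure.dirac (x, x) + ENNReal.ofReal t • Measure.dirac (y, x))
      (by
        constructor
        · simp [mixD, Measure.map_add _ _ measurable_fst, Measure.map_smul,
            Measure.map_dirac' measurable_fst]
        · simp only [Measure.map_add _ _ measurable_snd, Measure.map_smul,
            Measure.map_dirac' measurable_snd]
          rw [← add_smul, hsum, one_smul])
    refine lt_of_le_of_lt h ?_
    simp only [lintegral_add_measure, lintegral_smul_measure, lintegral_dirac,
      edist_self, smul_eq_mul, mul_zero, zero_add]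
    exact ENNReal.mul_lt_top ENNReal.ofReal_lt_top (edist_lt_top y x)

end Aux

theorem stmt_9 {X : Type} [MetricSpace X] [MeasurableSpace X] [BorelSpace X]
    (b : Measure X → X)
    (hb_dirac : ∀ x : X, b (Measure.dirac x) = x)
    (hb_contract : ∀ μ ν : Measure X, InP1 μ → InP1 ν → edist (b μ) (b ν) ≤ W1 μ ν) :
    IsConicalBicombing (fun x y t =>
      b (ENNReal.ofReal (1 - t) • Measure.dirac x + ENNReal.ofReal t • Measure.dirac y)) := by
  have hmix : ∀ x y : X, ∀ t : ℝ,
      (ENNReal.ofReal (1 - t) • Measure.dirac x + ENNReal.ofReal t • Measure.dirac y) =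
        mixD x y t := fun _ _ _ => rfl
  -- endpoints
  have hend : ∀ x y : X, b (mixD x y 0) = x ∧ b (mixD x y 1) = y := by
    intro x y
    constructor
    · simp [mixD, hb_dirac]
    · simp [mixD, hb_dirac]
  -- distance upper bound along the geodesic
  have hgeo : ∀ x y : X, ∀ s t : ℝ, 0 ≤ s → s ≤ t → t ≤ 1 →
      dist (b (mixD x y s)) (b (mixD x y t)) ≤ (t - s) * dist x y := by
    intro x y s t hs hst ht
    have h := (hb_contract _ _ (inP1_mixD x y s hs (hst.trans ht) )
      (inP1_mixD x y t (hs.trans hst) ht)).trans (w1_mix_geo x y s t hs hst ht)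
    simp only [edist_dist] at h
    rw [← ENNReal.ofReal_mul (by linarith)] at h
    exact (ENNReal.ofReal_le_ofReal_iff (mul_nonneg (by linarith) dist_nonneg)).1 h
  refine ⟨?_, ?_, ?_⟩
  · intro x y; exact hend x y
  · intro x y s hsI t htI
    obtain ⟨hs0, hs1⟩ := hsI; obtain ⟨ht0, ht1⟩ := htI
    simp only [hmix]
    -- wlog s ≤ t
    have key : ∀ s t : ℝ, 0 ≤ s → s ≤ t → t ≤ 1 →
        dist (b (mixD x y s)) (b (mixD x y t)) = (t - s) * dist x y := by
      intro s t hs hst ht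
      refine le_antisymm (hgeo x y s t hs hst ht) ?_
      have h1 : dist x (b (mixD x y s)) ≤ s * dist x y := by
        have := hgeo x y 0 s le_rfl hs (hst.trans ht)
        rwa [(hend x y).1, sub_zero] at this
      have h2 : dist (b (mixD x y t)) y ≤ (1 - t) * dist x y := by
        have := hgeo x y t 1 (hs.trans hst) ht le_rfl
        rwa [(hend x y).2] at this
      have h3 : dist x y ≤ dist x (b (mixD x y s)) + dist (b (mixD x y s)) (b (mixD x y t))
          + dist (b (mixD x y t)) y := dist_triangle4 _ _ _ _
      have : (t - s) * dist x y = dist x y - s * dist x y - (1 - t) * dist x y := by ring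
      rw [this]; linarith
    rcases le_total s t with h | h
    · rw [key s t hs0 h ht1, abs_of_nonpos (by linarith), neg_sub]
    · rw [dist_comm, key t s ht0 h hs1, abs_of_nonneg (by linarith)]
  · intro x x' y y' t htI
    obtain ⟨ht0, ht1⟩ := htI
    simp only [hmix]
    have h := (hb_contract _ _ (inP1_mixD x y t ht0 ht1)
      (inP1_mixD x' y' t ht0 ht1)).trans (w1_mix_same_t x x' y y' t)
    simp only [edist_dist] at h
    rw [← ENNReal.ofReal_mul (by linarith), ← ENNReal.ofReal_mul ht0,
      ← ENNReal.ofReal_add (mul_nonneg (by linarith) dist_nonneg)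
        (mul_nonneg ht0 dist_nonneg)] at h
    exact (ENNReal.ofReal_le_ofReal_iff (add_nonneg (mul_nonneg (by linarith) dist_nonneg)
      (mul_nonneg ht0 dist_nonneg))).1 h
end

section
/- Let γ ∈ (0, π/2), and for a ∈ (0, π/2], t ∈ [−π, π] define g(a,t) := sin(a−t)·cot(γ)/√(sin²a + cot²γ·sin²(a−t)) + (t/π)·cot(γ)/√(sin²a + cot²γ). Then for each fixed t ∈ [0, π], the function a ↦ g(a,t) is nondecreasing on [max{0, t − π/2}, π/2]. -/
open Real

noncomputable def g (γ a t : ℝ) : ℝ :=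
  Real.sin (a - t) * (Real.cos γ / Real.sin γ) /
      Real.sqrt (Real.sin a ^ 2 + (Real.cos γ / Real.sin γ) ^ 2 * Real.sin (a - t) ^ 2) +
    t / π * (Real.cos γ / Real.sin γ) /
      Real.sqrt (Real.sin a ^ 2 + (Real.cos γ / Real.sin γ) ^ 2)

lemma hasDerivAt_term1 (c t a : ℝ)
    (hD : 0 < Real.sin a ^ 2 + c ^ 2 * Real.sin (a - t) ^ 2) :
    HasDerivAt (fun x => Real.sin (x - t) * c /
        Real.sqrt (Real.sin x ^ 2 + c ^ 2 * Real.sin (x - t) ^ 2))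
      (c * Real.sin a * Real.sin t /
        ((Real.sin a ^ 2 + c ^ 2 * Real.sin (a - t) ^ 2) *
          Real.sqrt (Real.sin a ^ 2 + c ^ 2 * Real.sin (a - t) ^ 2))) a := by
  have hs : HasDerivAt (fun x => Real.sin (x - t)) (Real.cos (a - t)) a := by
    exact ((Real.hasDerivAt_sin (a - t)).comp a ((hasDerivAt_id a).sub_const t)).congr_deriv (by simp : Real.cos (a - t) * 1 = Real.cos (a - t))
  have hsin : HasDerivAt Real.sin (Real.cos a) a := Real.hasDerivAt_sin a
  have hD1 : HasDerivAt (fun x => Real.sin x ^ 2 + c ^ 2 * Real.sin (x - t) ^ 2)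
      (2 * Real.sin a * Real.cos a + c ^ 2 * (2 * Real.sin (a - t) * Real.cos (a - t))) a := by
    have h1 := hsin.pow 2
    have h2 := (hs.pow 2).const_mul (c ^ 2)
    refine (h1.add h2).congr_deriv ?_
    ring
  have hr : HasDerivAt (fun x => Real.sqrt (Real.sin x ^ 2 + c ^ 2 * Real.sin (x - t) ^ 2))
      ((2 * Real.sin a * Real.cos a + c ^ 2 * (2 * Real.sin (a - t) * Real.cos (a - t))) /
        (2 * Real.sqrt (Real.sin a ^ 2 + c ^ 2 * Real.sin (a - t) ^ 2))) a :=
    hD1.sqrt hD.ne'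
  have hnum : HasDerivAt (fun x => Real.sin (x - t) * c) (Real.cos (a - t) * c) a :=
    hs.mul_const c
  have hrpos : 0 < Real.sqrt (Real.sin a ^ 2 + c ^ 2 * Real.sin (a - t) ^ 2) :=
    Real.sqrt_pos.2 hD
  have hdiv := hnum.div hr hrpos.ne'
  refine hdiv.congr_deriv (Eq.symm ?_)
  set r := Real.sqrt (Real.sin a ^ 2 + c ^ 2 * Real.sin (a - t) ^ 2) with hrdef
  have hr2 : r ^ 2 = Real.sin a ^ 2 + c ^ 2 * Real.sin (a - t) ^ 2 :=
    Real.sq_sqrt hD.le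
  have htrig : Real.sin t = Real.sin a * Real.cos (a - t) - Real.cos a * Real.sin (a - t) := by
    have := Real.sin_sub a (a - t)
    simpa using this
  rw [htrig]
  field_simp
  linear_combination (c * Real.sin a *
      (Real.sin a * Real.cos (a - t) - Real.cos a * Real.sin (a - t)) -
      c * (Real.sin a ^ 2 + c ^ 2 * Real.sin (a - t) ^ 2) * Real.cos (a - t)) * hr2

lemma hasDerivAt_term2 (c k a : ℝ) (hD : 0 < Real.sin a ^ 2 + c ^ 2) :
    HasDerivAt (fun x => k / Real.sqrt (Real.sin x ^ 2 + c ^ 2))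
      (-(k * (Real.sin a * Real.cos a) /
        ((Real.sin a ^ 2 + c ^ 2) * Real.sqrt (Real.sin a ^ 2 + c ^ 2)))) a := by
  have hD1 : HasDerivAt (fun x => Real.sin x ^ 2 + c ^ 2)
      (2 * Real.sin a * Real.cos a) a := by
    have h1 := (Real.hasDerivAt_sin a).pow 2
    simpa using h1.add_const (c ^ 2)
  have hr : HasDerivAt (fun x => Real.sqrt (Real.sin x ^ 2 + c ^ 2))
      ((2 * Real.sin a * Real.cos a) / (2 * Real.sqrt (Real.sin a ^ 2 + c ^ 2))) a :=
    hD1.sqrt hD.ne'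
  have hrpos : 0 < Real.sqrt (Real.sin a ^ 2 + c ^ 2) := Real.sqrt_pos.2 hD
  have hdiv := (hasDerivAt_const a k).div hr hrpos.ne'
  refine hdiv.congr_deriv (Eq.symm ?_)
  set r := Real.sqrt (Real.sin a ^ 2 + c ^ 2) with hrdef
  have hr2 : r ^ 2 = Real.sin a ^ 2 + c ^ 2 := Real.sq_sqrt hD.le
  rw [hr2]
  field_simp
  ring

theorem aux_main (c : ℝ) (hc : 0 < c) :
    ∀ t ∈ Set.Icc (0:ℝ) π,
      MonotoneOn (fun a =>
        Real.sin (a - t) * c /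
            Real.sqrt (Real.sin a ^ 2 + c ^ 2 * Real.sin (a - t) ^ 2) +
          t / π * c / Real.sqrt (Real.sin a ^ 2 + c ^ 2))
        (Set.Icc (max 0 (t - π / 2)) (π / 2)) := by
  have hπ : (0:ℝ) < π := Real.pi_pos
  intro t ht
  obtain ⟨ht0, htπ⟩ := ht
  rcases eq_or_lt_of_le ht0 with ht0' | ht0'
  · -- t = 0 case
    subst ht0'
    intro x hx y hy hxy
    simp only
    have hval : ∀ a, 0 < a → a ≤ π / 2 →
        Real.sin (a - 0) * c / Real.sqrt (Real.sin a ^ 2 + c ^ 2 * Real.sin (a - 0) ^ 2) +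
          0 / π * c / Real.sqrt (Real.sin a ^ 2 + c ^ 2) = c / Real.sqrt (1 + c ^ 2) := by
      intro a ha0 ha2
      have hsa : 0 < Real.sin a := Real.sin_pos_of_pos_of_lt_pi ha0 (by linarith)
      have hfac : Real.sin a ^ 2 + c ^ 2 * Real.sin (a - 0) ^ 2
          = Real.sin a ^ 2 * (1 + c ^ 2) := by ring_nf
      have hsq : Real.sqrt (Real.sin a ^ 2 * (1 + c ^ 2))
          = Real.sin a * Real.sqrt (1 + c ^ 2) := by
        rw [Real.sqrt_mul (sq_nonneg _), Real.sqrt_sq hsa.le]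
      rw [hfac, hsq]
      have h1 : 0 < Real.sqrt (1 + c ^ 2) := Real.sqrt_pos.2 (by positivity)
      rw [sub_zero]
      field_simp
      ring
    rcases eq_or_lt_of_le (le_trans (le_max_left 0 (0 - π / 2)) hx.1) with hx0 | hx0
    · -- x = 0
      have hgx : Real.sin ((0:ℝ) - 0) * c /
            Real.sqrt (Real.sin (0:ℝ) ^ 2 + c ^ 2 * Real.sin ((0:ℝ) - 0) ^ 2) +
          0 / π * c / Real.sqrt (Real.sin (0:ℝ) ^ 2 + c ^ 2) = 0 := by
        simp
      rw [← hx0, hgx]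
      rcases eq_or_lt_of_le (le_trans (le_max_left 0 (0 - π / 2)) hy.1) with hy0 | hy0
      · rw [← hy0, hgx]
      · rw [hval y hy0 hy.2]
        positivity
    · have hy0 : 0 < y := lt_of_lt_of_le hx0 hxy
      rw [hval x hx0 hx.2, hval y hy0 hy.2]
  · -- 0 < t case
    have hD1pos : ∀ a ∈ Set.Icc (max 0 (t - π / 2)) (π / 2),
        0 < Real.sin a ^ 2 + c ^ 2 * Real.sin (a - t) ^ 2 := by
      intro a ha
      have ha0 : 0 ≤ a := le_trans (le_max_left _ _) ha.1
      rcases eq_or_lt_of_le ha0 with ha0' | ha0'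
      · -- a = 0
        have htle : t ≤ π / 2 := by
          have := le_trans (le_max_right 0 (t - π / 2)) ha.1
          rw [← ha0'] at this
          linarith
        have hst : 0 < Real.sin t := Real.sin_pos_of_pos_of_lt_pi ht0' (by linarith)
        have : Real.sin (a - t) ^ 2 = Real.sin t ^ 2 := by
          rw [← ha0']
          simp [Real.sin_neg]
        rw [this]
        have : 0 < c ^ 2 * Real.sin t ^ 2 := by positivity
        nlinarith [sq_nonneg (Real.sin a)]
      · have hsa : 0 < Real.sin a := Real.sin_pos_of_pos_of_lt_pi ha0' (by linarith [ha.2])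
        positivity
    have hD2pos : ∀ a : ℝ, 0 < Real.sin a ^ 2 + c ^ 2 := by
      intro a
      positivity
    apply monotoneOn_of_deriv_nonneg (convex_Icc _ _)
    · -- ContinuousOn
      apply ContinuousOn.add
      · apply ContinuousOn.div
        · fun_prop
        · fun_prop
        · intro a ha
          exact Real.sqrt_ne_zero'.2 (hD1pos a ha)
      · apply ContinuousOn.div
        · fun_prop
        · fun_prop
        · intro a ha
          exact Real.sqrt_ne_zero'.2 (hD2pos a)
    · -- DifferentiableOn interior
      rw [interior_Icc]
      intro x hx
      have hx' : x ∈ Set.Icc (max 0 (t - π / 2)) (π / 2) := ⟨hx.1.le, hx.2.le⟩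
      have h1 := hasDerivAt_term1 c t x (hD1pos x hx')
      have h2 := hasDerivAt_term2 c (t / π * c) x (hD2pos x)
      have := (h1.add h2).differentiableAt
      exact this.differentiableWithinAt
    · -- deriv nonneg
      rw [interior_Icc]
      intro x hx
      have hx0 : 0 < x := lt_of_le_of_lt (le_max_left 0 (t - π / 2)) hx.1
      have hx2 : x < π / 2 := hx.2
      have hx' : x ∈ Set.Icc (max 0 (t - π / 2)) (π / 2) := ⟨hx.1.le, hx.2.le⟩
      have hD1 := hD1pos x hx'
      have hD2 := hD2pos x
      have h1 := hasDerivAt_term1 c t x hD1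
      have h2 := hasDerivAt_term2 c (t / π * c) x hD2
      have hder : HasDerivAt (fun a =>
          Real.sin (a - t) * c /
              Real.sqrt (Real.sin a ^ 2 + c ^ 2 * Real.sin (a - t) ^ 2) +
            t / π * c / Real.sqrt (Real.sin a ^ 2 + c ^ 2))
          (c * Real.sin x * Real.sin t /
            ((Real.sin x ^ 2 + c ^ 2 * Real.sin (x - t) ^ 2) *
              Real.sqrt (Real.sin x ^ 2 + c ^ 2 * Real.sin (x - t) ^ 2)) +
           -(t / π * c * (Real.sin x * Real.cos x) /
            ((Real.sin x ^ 2 + c ^ 2) * Real.sqrt (Real.sin x ^ 2 + c ^ 2)))) x :=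
        h1.add h2
      rw [hder.deriv]
      -- key inequality : t/π * cos x ≤ sin t
      have hsinx : 0 < Real.sin x := Real.sin_pos_of_pos_of_lt_pi hx0 (by linarith)
      have hcosx : 0 ≤ Real.cos x := Real.cos_nonneg_of_mem_Icc ⟨by linarith, hx2.le⟩
      have hsint : 0 ≤ Real.sin t := Real.sin_nonneg_of_nonneg_of_le_pi ht0 htπ
      have hkey : t / π * Real.cos x ≤ Real.sin t := by
        rcases le_or_gt t (π / 2) with hle | hlt
        · have hJ := Real.mul_le_sin ht0 hle
          have hc1 : Real.cos x ≤ 1 := Real.cos_le_one x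
          have h1 : t / π * Real.cos x ≤ t / π := by
            have := mul_le_mul_of_nonneg_left hc1 (div_nonneg ht0 hπ.le)
            simpa using this
          have h0 : 0 ≤ t / π := div_nonneg ht0 hπ.le
          have h2 : t / π ≤ 2 / π * t := by
            have heq : 2 / π * t = 2 * (t / π) := by ring
            linarith
          linarith
        · have htx : t - π / 2 ≤ x := le_trans (le_max_right 0 (t - π / 2)) hx.1.le
          have hcc : Real.cos x ≤ Real.cos (t - π / 2) :=
            Real.cos_le_cos_of_nonneg_of_le_pi (by linarith) (by linarith) htx
          have hcs : Real.cos (t - π / 2) = Real.sin t := by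
            rw [show t - π / 2 = -(π / 2 - t) by ring, Real.cos_neg,
              Real.cos_pi_div_two_sub]
          rw [hcs] at hcc
          have ht1 : t / π ≤ 1 := by
            rw [div_le_one hπ]; exact htπ
          have h0 : 0 ≤ t / π := div_nonneg ht0 hπ.le
          nlinarith
      -- denominators
      have hD12 : Real.sin x ^ 2 + c ^ 2 * Real.sin (x - t) ^ 2 ≤ Real.sin x ^ 2 + c ^ 2 := by
        nlinarith [Real.sin_sq_le_one (x - t), sq_nonneg c]
      have hr1 : 0 < Real.sqrt (Real.sin x ^ 2 + c ^ 2 * Real.sin (x - t) ^ 2) :=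
        Real.sqrt_pos.2 hD1
      have hr2 : 0 < Real.sqrt (Real.sin x ^ 2 + c ^ 2) := Real.sqrt_pos.2 hD2
      have hrle : Real.sqrt (Real.sin x ^ 2 + c ^ 2 * Real.sin (x - t) ^ 2)
          ≤ Real.sqrt (Real.sin x ^ 2 + c ^ 2) := Real.sqrt_le_sqrt hD12
      have hprod : (Real.sin x ^ 2 + c ^ 2 * Real.sin (x - t) ^ 2) *
            Real.sqrt (Real.sin x ^ 2 + c ^ 2 * Real.sin (x - t) ^ 2)
          ≤ (Real.sin x ^ 2 + c ^ 2) * Real.sqrt (Real.sin x ^ 2 + c ^ 2) :=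
        mul_le_mul hD12 hrle hr1.le (le_trans hD1.le hD12)
      have hprod1 : 0 < (Real.sin x ^ 2 + c ^ 2 * Real.sin (x - t) ^ 2) *
            Real.sqrt (Real.sin x ^ 2 + c ^ 2 * Real.sin (x - t) ^ 2) := mul_pos hD1 hr1
      have hnumnn : 0 ≤ t / π * c * (Real.sin x * Real.cos x) := by positivity
      have hstep1 : t / π * c * (Real.sin x * Real.cos x) /
            ((Real.sin x ^ 2 + c ^ 2) * Real.sqrt (Real.sin x ^ 2 + c ^ 2))
          ≤ t / π * c * (Real.sin x * Real.cos x) /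
            ((Real.sin x ^ 2 + c ^ 2 * Real.sin (x - t) ^ 2) *
              Real.sqrt (Real.sin x ^ 2 + c ^ 2 * Real.sin (x - t) ^ 2)) :=
        div_le_div_of_nonneg_left hnumnn hprod1 hprod
      have hstep2 : t / π * c * (Real.sin x * Real.cos x) /
            ((Real.sin x ^ 2 + c ^ 2 * Real.sin (x - t) ^ 2) *
              Real.sqrt (Real.sin x ^ 2 + c ^ 2 * Real.sin (x - t) ^ 2))
          ≤ c * Real.sin x * Real.sin t /
            ((Real.sin x ^ 2 + c ^ 2 * Real.sin (x - t) ^ 2) *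
              Real.sqrt (Real.sin x ^ 2 + c ^ 2 * Real.sin (x - t) ^ 2)) := by
        apply (div_le_div_iff_of_pos_right hprod1).2
        nlinarith [mul_le_mul_of_nonneg_left hkey (mul_nonneg hc.le hsinx.le)]
      linarith


theorem stmt_13 (γ : ℝ) (hγ : γ ∈ Set.Ioo 0 (π / 2)) :
    ∀ t ∈ Set.Icc (0:ℝ) π,
      MonotoneOn (fun a => g γ a t) (Set.Icc (max 0 (t - π / 2)) (π / 2)) := by
  obtain ⟨hγ0, hγ2⟩ := hγ
  have hsγ : 0 < Real.sin γ := Real.sin_pos_of_pos_of_lt_pi hγ0 (by linarith [Real.pi_pos])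
  have hcγ : 0 < Real.cos γ := Real.cos_pos_of_mem_Ioo ⟨by linarith [Real.pi_pos], hγ2⟩
  have hc : 0 < Real.cos γ / Real.sin γ := div_pos hcγ hsγ
  intro t ht
  exact aux_main (Real.cos γ / Real.sin γ) hc t ht
end
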